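/- The set H of elements of SU(2,2) whose upper-right 2×2 block vanishes is a subgroup of SU(2,2), and the map Θ : H → K defined on h = [[a,0],[c,(a†)⁻¹]] by Θ(h) = diag(λ^{-1/2} a, λ^{1/2} (a†)⁻¹), where λ = |det a|, is a well-defined group homomorphism from H into K. -/

import Mathlib

open Matrix Complex

noncomputable section

abbrev M2 : Type := Matrix (Fin 2) (Fin 2) ℂ
abbrev M4 : Type := Matrix (Fin 2 ⊕ Fin 2) (Fin 2 ⊕ Fin 2) ℂ

/-- The Hermitian form of signature (2,2): `g = [[0,I₂],[I₂,0]]`. -/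
def gMat : M4 := fromBlocks 0 1 1 0

/-- `H = {A ∈ SU(2,2) : upper-right 2×2 block of A vanishes}`. -/
def Hset : Set M4 := {A | Aᴴ * gMat * A = gMat ∧ A.det = 1 ∧ A.toBlocks₁₂ = 0}

/-- `K = {diag(a, (a†)⁻¹) : a ∈ GL(2,ℂ), |det a| = 1}`. -/
def Kset : Set M4 :=
  {A | ∃ a : M2, IsUnit a ∧ ‖a.det‖ = 1 ∧ A = fromBlocks a 0 0 (aᴴ)⁻¹}

/-- `Θ([[a,0],[c,d]]) = diag(λ^{-1/2} a, λ^{1/2} d)` with `λ = |det a|`. -/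
def Theta (A : M4) : M4 :=
  fromBlocks ((Real.sqrt (‖(A.toBlocks₁₁).det‖))⁻¹ • A.toBlocks₁₁) 0
    0 (Real.sqrt (‖(A.toBlocks₁₁).det‖) • A.toBlocks₂₂)

lemma gg : gMat * gMat = 1 := by
  simp [gMat, fromBlocks_multiply, ← fromBlocks_one]

lemma rsmul (r : ℝ) (M : M2) : r • M = (r : ℂ) • M := by
  ext i j; simp [Matrix.smul_apply, Complex.real_smul]

lemma hset_eq {A : M4} (hA : A ∈ Hset) :
    ∃ a c d : M2, A = fromBlocks a 0 c d ∧ aᴴ * d = 1 ∧ dᴴ * a = 1 ∧ a.det * d.det = 1 := by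
  obtain ⟨hg, hdet, h12⟩ := hA
  refine ⟨A.toBlocks₁₁, A.toBlocks₂₁, A.toBlocks₂₂, ?_, ?_, ?_, ?_⟩
  · rw [← h12]; exact (fromBlocks_toBlocks A).symm
  all_goals {
    have hA' : A = fromBlocks A.toBlocks₁₁ 0 A.toBlocks₂₁ A.toBlocks₂₂ := by
      rw [← h12]; exact (fromBlocks_toBlocks A).symm
    rw [hA'] at hg hdet
    simp [gMat, fromBlocks_multiply, fromBlocks_conjTranspose, det_fromBlocks_zero₁₂,
      ← fromBlocks_one] at hg hdet
    first
    | exact hg.2.1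
    | exact hg.2.2
    | exact hdet }

lemma theta_eq {A : M4} (a c d : M2) (hA : A = fromBlocks a 0 c d) :
    Theta A = fromBlocks ((Real.sqrt (‖a.det‖))⁻¹ • a) 0
      0 (Real.sqrt (‖a.det‖) • d) := by
  subst hA
  simp [Theta, toBlocks_fromBlocks₁₁, toBlocks_fromBlocks₂₂]

/-- `H` is a subgroup of `SU(2,2)` and `Θ : H → K` is a well-defined
group homomorphism. -/
theorem stmt5 :
    (1 : M4) ∈ Hset ∧
    (∀ A ∈ Hset, ∀ B ∈ Hset, A * B ∈ Hset) ∧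
    (∀ A ∈ Hset, ∃ B ∈ Hset, A * B = 1 ∧ B * A = 1) ∧
    (∀ A ∈ Hset, Theta A ∈ Kset) ∧
    (∀ A ∈ Hset, ∀ B ∈ Hset, Theta (A * B) = Theta A * Theta B) := by
  refine ⟨⟨by simp, by simp, ?_⟩, ?_, ?_, ?_, ?_⟩
  · rw [← fromBlocks_one]; exact toBlocks_fromBlocks₁₂ _ _ _ _
  · -- closure
    intro A hA B hB
    obtain ⟨a, c, d, hA', _⟩ := hset_eq hA
    obtain ⟨a', c', d', hB', _⟩ := hset_eq hB
    refine ⟨?_, ?_, ?_⟩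
    · calc (A * B)ᴴ * gMat * (A * B) = Bᴴ * (Aᴴ * gMat * A) * B := by
            simp only [conjTranspose_mul]; simp only [mul_assoc]
      _ = gMat := by rw [hA.1]; exact hB.1
    · rw [Matrix.det_mul, hA.2.1, hB.2.1, one_mul]
    · rw [hA', hB', fromBlocks_multiply]
      simp [toBlocks_fromBlocks₁₂]
  · -- inverses
    intro A hA
    obtain ⟨a, c, d, hA', _⟩ := hset_eq hA
    set B := gMat * Aᴴ * gMat with hB
    have hBA : B * A = 1 := by
      calc gMat * Aᴴ * gMat * A = gMat * (Aᴴ * gMat * A) := by simp only [mul_assoc]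
        _ = 1 := by rw [hA.1, gg]
    have hAB : A * B = 1 := mul_eq_one_comm.mp hBA
    refine ⟨B, ⟨?_, ?_, ?_⟩, hAB, hBA⟩
    · calc Bᴴ * gMat * B = Bᴴ * (Aᴴ * gMat * A) * B := by rw [hA.1]
        _ = (A * B)ᴴ * gMat * (A * B) := by
            simp only [conjTranspose_mul]; simp only [mul_assoc]
        _ = gMat := by rw [hAB]; simp
    · have := congrArg Matrix.det hBA
      rwa [Matrix.det_mul, hA.2.1, mul_one, Matrix.det_one] at this
    · rw [hB, hA']
      simp [gMat, fromBlocks_conjTranspose, fromBlocks_multiply, toBlocks_fromBlocks₁₂]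
  · -- Theta maps into Kset
    intro A hA
    obtain ⟨a, c, d, hA', h1, h2, h3⟩ := hset_eq hA
    set s := Real.sqrt (‖a.det‖) with hs
    have hdet0 : a.det ≠ 0 := left_ne_zero_of_mul_eq_one h3
    have habs0 : 0 < ‖a.det‖ := norm_pos_iff.mpr hdet0
    have hspos : 0 < s := Real.sqrt_pos.mpr habs0
    have hs2 : s ^ 2 = ‖a.det‖ := Real.sq_sqrt habs0.le
    have hsne : (s : ℂ) ≠ 0 := by exact_mod_cast hspos.ne'
    have hH : ((s⁻¹ • a : M2))ᴴ = s⁻¹ • (aᴴ) := by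
      rw [rsmul, rsmul, conjTranspose_smul]
      congr 1
      simp
    have key : ((s⁻¹ • a : M2))ᴴ * (s • d) = 1 := by
      rw [hH]
      rw [smul_mul_assoc, mul_smul_comm, smul_smul, inv_mul_cancel₀ hspos.ne', one_smul, h1]
    refine ⟨s⁻¹ • a, ?_, ?_, ?_⟩
    · rw [Matrix.isUnit_iff_isUnit_det, rsmul, Matrix.det_smul, isUnit_iff_ne_zero]
      simp only [Fintype.card_fin]
      push_cast
      exact mul_ne_zero (pow_ne_zero _ (inv_ne_zero hsne)) hdet0
    · rw [rsmul, Matrix.det_smul]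
      simp only [Fintype.card_fin]
      push_cast
      rw [norm_mul, norm_pow, norm_inv, Complex.norm_real, Real.norm_of_nonneg hspos.le, ← hs2]
      field_simp
    · rw [theta_eq a c d hA', Matrix.inv_eq_right_inv key]
  · -- multiplicative
    intro A hA B hB
    obtain ⟨a, c, d, hA', _⟩ := hset_eq hA
    obtain ⟨a', c', d', hB', _⟩ := hset_eq hB
    have hAB : A * B = fromBlocks (a * a') 0 (c * a' + d * c') (d * d') := by
      rw [hA', hB', fromBlocks_multiply]; simp
    rw [theta_eq _ _ _ hAB, theta_eq a c d hA', theta_eq a' c' d' hB', fromBlocks_multiply]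
    have habs : ‖(a * a').det‖ = ‖a.det‖ * ‖a'.det‖ := by
      rw [Matrix.det_mul, norm_mul]
    rw [habs, Real.sqrt_mul (norm_nonneg _)]
    congr 1 <;>
      simp [smul_mul_assoc, mul_smul_comm, smul_smul, mul_inv, mul_comm]
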